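/- If ν ≪ μ, then the family (f_π(μ))_π, indexed by all finite measurable partitions π of Ω and given by f_π(μ) := Σ_{A ∈ π, μ(A) > 0} 1_A · ν(A)/μ(A), is uniformly integrable in L¹(μ): for every ε > 0 there exists k > 0 such that ∫_{{f_π(μ) ≥ k}} f_π(μ) dμ < ε for every finite measurable partition π. -/

import Mathlib

open MeasureTheory Filter Set
open scoped ENNReal Topology Classical

/-- A finite measurable partition of `Ω`: a finite collection of pairwise disjoint measurable
sets whose union is `Ω`. -/
def IsFinitePartition {Ω : Type*} [MeasurableSpace Ω] (π : Finset (Set Ω)) : Prop :=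
  (∀ A ∈ π, MeasurableSet A) ∧
    (π : Set (Set Ω)).PairwiseDisjoint id ∧
    ⋃₀ (π : Set (Set Ω)) = Set.univ

/-- `f_π(μ) := Σ_{A ∈ π, μ(A) > 0} 1_A ⬝ ν(A)/μ(A)`. -/
noncomputable def partFn {Ω : Type*} [MeasurableSpace Ω] (ν lam : Measure Ω)
    (π : Finset (Set Ω)) (x : Ω) : ℝ :=
  ∑ A ∈ π, if lam A ≠ 0 ∧ x ∈ A then (ν A).toReal / (lam A).toReal else 0

/-- Value of `partFn` at a point of a cell. -/
lemma partFn_eq_of_mem {Ω : Type*} [MeasurableSpace Ω] (ν lam : Measure Ω)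
    {π : Finset (Set Ω)} (hdisj : (π : Set (Set Ω)).PairwiseDisjoint id)
    {A : Set Ω} (hA : A ∈ π) {x : Ω} (hx : x ∈ A) :
    partFn ν lam π x = if lam A ≠ 0 then (ν A).toReal / (lam A).toReal else 0 := by
  unfold partFn
  rw [Finset.sum_eq_single_of_mem A hA]
  · by_cases h : lam A ≠ 0 <;> simp [h, hx]
  · intro B hB hBA
    have hxB : x ∉ B := by
      intro hxB
      exact (hdisj hB hA hBA).le_bot (Set.mem_inter hxB hx)
    simp [hxB]

lemma partFn_integrable {Ω : Type*} [MeasurableSpace Ω] (ν μ : Measure Ω)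
    [IsFiniteMeasure μ] {π : Finset (Set Ω)} (hmeas : ∀ A ∈ π, MeasurableSet A) :
    Integrable (partFn ν μ π) μ := by
  have heq : partFn ν μ π = fun x => ∑ A ∈ π,
      Set.indicator A (fun _ => if μ A ≠ 0 then (ν A).toReal / (μ A).toReal else 0) x := by
    funext x
    unfold partFn
    refine Finset.sum_congr rfl fun A _ => ?_
    by_cases hxA : x ∈ A <;> by_cases h0 : μ A ≠ 0 <;>
      simp [Set.indicator_apply, hxA, h0]
  rw [heq]
  exact integrable_finset_sum _ fun A hA =>
    (integrable_const _).indicator (hmeas A hA)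

/-- If `μ, ν` are finite measures with `ν ≪ μ`, then the family `(f_π(μ))_π`, indexed by all
finite measurable partitions `π` of `Ω`, is uniformly integrable: for every `ε > 0` there
is `k > 0` such that `∫_{f_π(μ) ≥ k} f_π(μ) dμ < ε` for every finite measurable
partition `π`. -/
theorem stmt7 {Ω : Type*} [MeasurableSpace Ω] (μ ν : Measure Ω)
    [IsFiniteMeasure μ] [IsFiniteMeasure ν] (hac : ν ≪ μ) :
    ∀ ε > (0 : ℝ), ∃ k > (0 : ℝ), ∀ π : Finset (Set Ω), IsFinitePartition π →
      ∫ x in {y | k ≤ partFn ν μ π y}, partFn ν μ π x ∂μ < ε := by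
  intro ε hε
  -- ε-δ absolute continuity
  have hfin : ∫⁻ x, ν.rnDeriv μ x ∂μ ≠ ∞ := (Measure.lintegral_rnDeriv_lt_top ν μ).ne
  obtain ⟨δ, hδ0, hδ⟩ := exists_pos_setLIntegral_lt_of_measure_lt (μ := μ)
    (f := ν.rnDeriv μ) hfin (ε := ENNReal.ofReal ε) (by simp [hε])
  set δ' : ℝ≥0∞ := min δ 1 with hδ'def
  have hδ'0 : 0 < δ' := lt_min hδ0 one_pos
  have hδ'top : δ' ≠ ∞ := (min_le_right _ _).trans_lt (by norm_num) |>.ne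
  set d : ℝ := δ'.toReal with hddef
  have hd0 : 0 < d := ENNReal.toReal_pos hδ'0.ne' hδ'top
  set k : ℝ := (ν Set.univ).toReal / d + 1 with hkdef
  have hνuniv : 0 ≤ (ν Set.univ).toReal := ENNReal.toReal_nonneg
  have hk0 : 0 < k := by positivity
  refine ⟨k, hk0, fun π hπ => ?_⟩
  obtain ⟨hmeas, hdisj, huniv⟩ := hπ
  set S : Set Ω := {y | k ≤ partFn ν μ π y} with hSdef
  set π' : Finset (Set Ω) := π.filter
    (fun A => μ A ≠ 0 ∧ k ≤ (ν A).toReal / (μ A).toReal) with hπ'def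
  have hπ'sub : ∀ A ∈ π', A ∈ π := fun A hA => Finset.mem_filter.1 hA |>.1
  -- S is the union of the cells in π'
  have hS : S = ⋃ A ∈ π', (A : Set Ω) := by
    ext x
    constructor
    · intro hx
      have : x ∈ ⋃₀ (π : Set (Set Ω)) := huniv ▸ Set.mem_univ x
      obtain ⟨A, hAπ, hxA⟩ := this
      have hAπ : A ∈ π := hAπ
      have hval := partFn_eq_of_mem ν μ hdisj hAπ hxA
      have hkx : k ≤ partFn ν μ π x := hx
      by_cases h0 : μ A ≠ 0
      · rw [if_pos h0] at hval
        refine Set.mem_biUnion ?_ hxA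
        refine Finset.mem_filter.2 ⟨hAπ, h0, ?_⟩
        rw [← hval]; exact hkx
      · rw [if_neg h0] at hval
        rw [hval] at hkx
        exact absurd hkx (not_le.2 hk0)
    · intro hx
      obtain ⟨A, hA, hxA⟩ := Set.mem_iUnion₂.1 hx
      obtain ⟨hAπ, h0, hr⟩ := Finset.mem_filter.1 hA
      have hval := partFn_eq_of_mem ν μ hdisj hAπ hxA
      rw [if_pos h0] at hval
      show k ≤ partFn ν μ π x
      rw [hval]; exact hr
  have hint : Integrable (partFn ν μ π) μ := partFn_integrable ν μ hmeas
  have hmeas' : ∀ A ∈ π', MeasurableSet A := fun A hA => hmeas A (hπ'sub A hA)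
  have hdisj' : Set.Pairwise (↑π') (Function.onFun Disjoint (id : Set Ω → Set Ω)) := by
    intro A hA B hB hAB
    exact hdisj (hπ'sub A (by exact_mod_cast hA)) (hπ'sub B (by exact_mod_cast hB)) hAB
  -- integral over S as a sum
  have hsplit : ∫ x in S, partFn ν μ π x ∂μ = ∑ A ∈ π', ∫ x in A, partFn ν μ π x ∂μ := by
    rw [hS]
    exact integral_biUnion_finset π' hmeas' hdisj' (fun A _ => hint.integrableOn)
  -- each piece equals ν A
  have hpiece : ∀ A ∈ π', ∫ x in A, partFn ν μ π x ∂μ = (ν A).toReal := by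
    intro A hA
    obtain ⟨hAπ, h0, _⟩ := Finset.mem_filter.1 hA
    have hcongr : ∫ x in A, partFn ν μ π x ∂μ
        = ∫ _ in A, ((ν A).toReal / (μ A).toReal) ∂μ := by
      refine setIntegral_congr_fun (hmeas A hAπ) fun x hx => ?_
      have := partFn_eq_of_mem ν μ hdisj hAπ hx
      simpa [h0] using this
    rw [hcongr, setIntegral_const]
    have hμA : (μ A).toReal ≠ 0 :=
      (ENNReal.toReal_pos h0 (measure_ne_top μ A)).ne'
    rw [smul_eq_mul]
    field_simp
    unfold Measure.real; ring
  have hSmeas : MeasurableSet S := by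
    rw [hS]; exact Finset.measurableSet_biUnion π' hmeas'
  -- measure computations
  have hνS : ν S = ∑ A ∈ π', ν A := by
    rw [hS]; exact measure_biUnion_finset hdisj' hmeas'
  have hμS : μ S = ∑ A ∈ π', μ A := by
    rw [hS]; exact measure_biUnion_finset hdisj' hmeas'
  -- bound μ S
  have hμStoReal : (μ S).toReal ≤ (ν Set.univ).toReal / k := by
    have h1 : (μ S).toReal = ∑ A ∈ π', (μ A).toReal := by
      rw [hμS]; exact ENNReal.toReal_sum fun A _ => measure_ne_top μ A
    have h2 : (ν S).toReal = ∑ A ∈ π', (ν A).toReal := by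
      rw [hνS]; exact ENNReal.toReal_sum fun A _ => measure_ne_top ν A
    have h3 : ∑ A ∈ π', (μ A).toReal ≤ ∑ A ∈ π', (ν A).toReal / k := by
      refine Finset.sum_le_sum fun A hA => ?_
      obtain ⟨hAπ, h0, hr⟩ := Finset.mem_filter.1 hA
      have hμA : 0 < (μ A).toReal := ENNReal.toReal_pos h0 (measure_ne_top μ A)
      rw [le_div_iff₀ hk0]
      calc (μ A).toReal * k ≤ (μ A).toReal * ((ν A).toReal / (μ A).toReal) := by
            exact mul_le_mul_of_nonneg_left hr hμA.le
        _ = (ν A).toReal := by field_simp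
    have h4 : ∑ A ∈ π', (ν A).toReal / k = (∑ A ∈ π', (ν A).toReal) / k :=
      (Finset.sum_div _ _ _).symm
    have h5 : (ν S).toReal ≤ (ν Set.univ).toReal :=
      ENNReal.toReal_mono (measure_ne_top ν _) (measure_mono (Set.subset_univ S))
    calc (μ S).toReal = ∑ A ∈ π', (μ A).toReal := h1
      _ ≤ (∑ A ∈ π', (ν A).toReal) / k := by rw [← h4]; exact h3
      _ = (ν S).toReal / k := by rw [h2]
      _ ≤ (ν Set.univ).toReal / k := by gcongr
  -- μ S < δ
  have hμSlt : μ S < δ := by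
    have hklt : (ν Set.univ).toReal / k < d := by
      rw [div_lt_iff₀ hk0]
      have hdk : d * k = (ν Set.univ).toReal + d := by
        rw [hkdef]; field_simp
      nlinarith [hdk, hd0]
    have : (μ S).toReal < d := lt_of_le_of_lt hμStoReal hklt
    have h6 : μ S < δ' :=
      (ENNReal.toReal_lt_toReal (measure_ne_top μ S) hδ'top).1 this
    exact h6.trans_le (min_le_left _ _)
  -- conclude
  have hνSlt : ν S < ENNReal.ofReal ε := by
    have := hδ S hμSlt
    rwa [Measure.setLIntegral_rnDeriv hac S] at this
  have hfinal : ∫ x in S, partFn ν μ π x ∂μ = (ν S).toReal := by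
    rw [hsplit, hνS, ENNReal.toReal_sum fun A _ => measure_ne_top ν A]
    exact Finset.sum_congr rfl hpiece
  rw [hfinal]
  exact ENNReal.toReal_lt_of_lt_ofReal hνSlt
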